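/- Let G be a finite simple connected graph with a nonempty terminal set R ⊆ V(G), and let G' be the graph obtained from G by adding two new nonadjacent vertices s and t, each made adjacent to every vertex of R. Then there exists a set T ⊆ V(G) \ R with |T| ≤ r such that the subgraph of G induced on R ∪ T is connected if and only if G' has a connected (s,t)-vertex separator of size at most |R| + r. -/
import Mathlib


open SimpleGraph

/-- A walk avoids a set `S` if none of its vertices lies in `S`. -/
def WalkAvoids {V : Type*} {G : SimpleGraph V} {u v : V} (p : G.Walk u v) (S : Set V) : Prop :=
  ∀ w ∈ p.support, w ∉ S

/-- `S` is an `(s,t)`-vertex separator: `s, t ∉ S` and every walk from `s` to `t` meets `S`. -/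
def IsSep {V : Type*} (G : SimpleGraph V) (s t : V) (S : Set V) : Prop :=
  s ∉ S ∧ t ∉ S ∧ ∀ p : G.Walk s t, ∃ w ∈ p.support, w ∈ S

/-- A connected `(s,t)`-vertex separator. -/
def IsConnSep {V : Type*} (G : SimpleGraph V) (s t : V) (S : Set V) : Prop :=
  IsSep G s t S ∧ (G.induce S).Connected

/-- A minimal `(s,t)`-vertex separator: no proper subset is a separator. -/
def IsMinimalSep {V : Type*} (G : SimpleGraph V) (s t : V) (S : Set V) : Prop :=
  IsSep G s t S ∧ ∀ S' ⊂ S, ¬ IsSep G s t S'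

/-- The connected component of `s` in `G − S`, as the set of vertices reachable
from `s` by walks avoiding `S`. -/
def CompOf {V : Type*} (G : SimpleGraph V) (S : Set V) (s : V) : Set V :=
  {v | ∃ p : G.Walk s v, WalkAvoids p S}

/-- `G` has chordality at most `c`: it contains no induced cycle of length at least `c+1`. -/
def ChordalityAtMost {V : Type*} (G : SimpleGraph V) (c : ℕ) : Prop :=
  ∀ n, c + 1 ≤ n → IsEmpty (cycleGraph n ↪g G)

/-- The graph `G'` obtained from `G` by adding two new nonadjacent vertices
`s = Sum.inr false` and `t = Sum.inr true`, each made adjacent to every vertex of `R`. -/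
def TermExt {V : Type*} (G : SimpleGraph V) (R : Set V) : SimpleGraph (V ⊕ Bool) :=
  SimpleGraph.fromRel (fun a b =>
    match a, b with
    | Sum.inl u, Sum.inl v => G.Adj u v
    | Sum.inl y, Sum.inr _ => y ∈ R
    | _, _ => False)

lemma termExt_adj_inl_inl {V : Type*} (G : SimpleGraph V) (R : Set V) (u v : V) :
    (TermExt G R).Adj (Sum.inl u) (Sum.inl v) ↔ G.Adj u v := by
  simp only [TermExt, fromRel_adj]
  constructor
  · rintro ⟨-, h | h⟩
    · exact h
    · exact h.symm
  · exact fun h => ⟨by simp [h.ne], Or.inl h⟩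

lemma termExt_adj_inr_inl {V : Type*} (G : SimpleGraph V) (R : Set V) (b : Bool) (y : V) :
    (TermExt G R).Adj (Sum.inr b) (Sum.inl y) ↔ y ∈ R := by
  simp only [TermExt, fromRel_adj]
  constructor
  · rintro ⟨-, h | h⟩
    · exact h.elim
    · exact h
  · exact fun h => ⟨by simp, Or.inr h⟩

lemma termExt_not_adj_inr {V : Type*} (G : SimpleGraph V) (R : Set V) (a b : Bool) :
    ¬ (TermExt G R).Adj (Sum.inr a) (Sum.inr b) := by
  simp only [TermExt, fromRel_adj]
  rintro ⟨-, h | h⟩ <;> exact h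

/-- The induced subgraph on `A` in `G` is isomorphic to the induced subgraph on
`Sum.inl '' A` in `TermExt G R`. -/
noncomputable def termExtInduceIso {V : Type*} (G : SimpleGraph V) (R : Set V) (A : Set V) :
    G.induce A ≃g (TermExt G R).induce (Sum.inl '' A) where
  toEquiv := Equiv.Set.image Sum.inl A Sum.inl_injective
  map_rel_iff' := by
    rintro ⟨a, ha⟩ ⟨b, hb⟩
    show (TermExt G R).Adj (Sum.inl a) (Sum.inl b) ↔ G.Adj a b
    exact termExt_adj_inl_inl G R a b

theorem stmt6 {V : Type*} [Fintype V] (G : SimpleGraph V) (hG : G.Connected)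
    (R : Set V) (hR : R.Nonempty) (r : ℕ) :
    (∃ T : Set V, T ⊆ Rᶜ ∧ T.ncard ≤ r ∧ (G.induce (R ∪ T)).Connected) ↔
    (∃ S : Set (V ⊕ Bool),
      IsConnSep (TermExt G R) (Sum.inr false) (Sum.inr true) S ∧
      S.ncard ≤ R.ncard + r) := by
  constructor
  · rintro ⟨T, hTR, hTcard, hTconn⟩
    refine ⟨Sum.inl '' (R ∪ T), ⟨⟨?_, ?_, ?_⟩, ?_⟩, ?_⟩
    · rintro ⟨y, -, h⟩; exact absurd h (by simp)
    · rintro ⟨y, -, h⟩; exact absurd h (by simp)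
    · intro p
      cases p with
      | cons h q =>
        rename_i w
        cases w with
        | inl y =>
          refine ⟨Sum.inl y, by simp, ⟨y, Or.inl ?_, rfl⟩⟩
          exact (termExt_adj_inr_inl G R false y).mp h
        | inr b => exact absurd h (termExt_not_adj_inr G R false b)
    · exact ((termExtInduceIso G R (R ∪ T)).connected_iff).mp hTconn
    · rw [Set.ncard_image_of_injective _ Sum.inl_injective]
      calc (R ∪ T).ncard ≤ R.ncard + T.ncard :=
            Set.ncard_union_le R T
        _ ≤ R.ncard + r := by omega
  · rintro ⟨S, ⟨⟨hs, ht, hsep⟩, hconn⟩, hcard⟩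
    -- every vertex of `R` (as `inl`) lies in `S`
    have hRS : ∀ y ∈ R, Sum.inl y ∈ S := by
      intro y hy
      have h1 : (TermExt G R).Adj (Sum.inr false) (Sum.inl y) :=
        (termExt_adj_inr_inl G R false y).mpr hy
      have h2 : (TermExt G R).Adj (Sum.inl y) (Sum.inr true) :=
        ((termExt_adj_inr_inl G R true y).mpr hy).symm
      obtain ⟨w, hw, hwS⟩ := hsep (Walk.cons h1 (Walk.cons h2 Walk.nil))
      simp only [Walk.support_cons, Walk.support_nil, List.mem_cons,
        List.not_mem_nil, or_false] at hw
      rcases hw with rfl | rfl | rfl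
      · exact absurd hwS hs
      · exact hwS
      · exact absurd hwS ht
    -- `S` consists only of `inl` vertices
    have hSinl : S = Sum.inl '' (Sum.inl ⁻¹' S) := by
      ext x
      cases x with
      | inl v => simp
      | inr b =>
        cases b
        · simp [hs]
        · simp [ht]
    set P : Set V := Sum.inl ⁻¹' S with hP
    have hRP : R ⊆ P := fun y hy => hRS y hy
    refine ⟨P \ R, fun x hx => hx.2, ?_, ?_⟩
    · have hPcard : P.ncard = S.ncard := by
        rw [hSinl, Set.ncard_image_of_injective _ Sum.inl_injective]
      have hRfin : R.Finite := Set.toFinite R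
      have hsplit : R.ncard + (P \ R).ncard = P.ncard := by
        rw [← Set.ncard_union_eq (Set.disjoint_sdiff_right) hRfin (Set.toFinite _),
          Set.union_diff_cancel hRP]
      omega
    · have hUP : R ∪ (P \ R) = P := Set.union_diff_cancel hRP
      rw [hUP]
      have := ((termExtInduceIso G R P).connected_iff).mpr
      rw [← hSinl] at this
      exact this hconn
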